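/- If σ is an incision function for a finite belief base B and α ∉ Cn(∅), then B \ σ(B ⊥⊥ α) does not entail α, i.e., α ∉ Cn(B \ σ(B ⊥⊥ α)). -/

import Mathlib

inductive PropForm (V : Type) : Type
  | var : V → PropForm V
  | fls : PropForm V
  | neg : PropForm V → PropForm V
  | conj : PropForm V → PropForm V → PropForm V
  | disj : PropForm V → PropForm V → PropForm V
  | impl : PropForm V → PropForm V → PropForm V

namespace PropForm
def eval {V : Type} (v : V → Prop) : PropForm V → Prop
  | var x => v x
  | fls => False
  | neg φ => ¬ eval v φ
  | conj φ ψ => eval v φ ∧ eval v ψ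
  | disj φ ψ => eval v φ ∨ eval v ψ
  | impl φ ψ => eval v φ → eval v ψ
end PropForm

/-- `α ∈ Cn(X)`: classical propositional consequence. -/
def Entails {V : Type} (X : Set (PropForm V)) (α : PropForm V) : Prop :=
  ∀ v : V → Prop, (∀ φ ∈ X, φ.eval v) → α.eval v

def Consistent {V : Type} (X : Set (PropForm V)) : Prop :=
  ∃ v : V → Prop, ∀ φ ∈ X, φ.eval v

/-- `B ⊥⊥ α`: the set of α-kernels (minimal subsets of B entailing α). -/
def Kernel {V : Type} (B : Set (PropForm V)) (α : PropForm V) :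
    Set (Set (PropForm V)) :=
  {X | X ⊆ B ∧ Entails X α ∧ ∀ Y, Y ⊂ X → ¬ Entails Y α}

/-- Kernel contraction succeeds: if σ is an incision function for finite B and
α ∉ Cn(∅), then α ∉ Cn(B \ σ(B ⊥⊥ α)). -/
theorem kernel_contraction_success {V : Type} (B : Set (PropForm V)) (α : PropForm V)
    (hB : B.Finite) (hα : ¬ Entails (∅ : Set (PropForm V)) α)
    (σ : Set (Set (PropForm V)) → Set (PropForm V))
    (hσ1 : σ (Kernel B α) ⊆ ⋃₀ Kernel B α)
    (hσ2 : ∀ X ∈ Kernel B α, X.Nonempty → (X ∩ σ (Kernel B α)).Nonempty) :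
    ¬ Entails (B \ σ (Kernel B α)) α := by
  intro h
  set K := σ (Kernel B α) with hK
  set S : Set (Set (PropForm V)) := {X | X ⊆ B \ K ∧ Entails X α} with hS
  have hSfin : S.Finite := by
    apply ((hB.sdiff (t := K)).finite_subsets).subset
    intro X hX; exact hX.1
  have hSne : S.Nonempty := ⟨B \ K, Set.Subset.rfl, h⟩
  obtain ⟨M, hM, hmin⟩ : ∃ M ∈ S, ∀ Y ∈ S, Y ⊆ M → M = Y := by
    obtain ⟨M, hM, hm⟩ := Set.Finite.exists_minimalFor id S hSfin hSne
    exact ⟨M, hM, fun Y hY hYM => (hm hY hYM).antisymm hYM⟩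
  have hMker : M ∈ Kernel B α := by
    refine ⟨hM.1.trans Set.diff_subset, hM.2, ?_⟩
    intro Y hY hYent
    have hYS : Y ∈ S := ⟨hY.subset.trans hM.1, hYent⟩
    have := hmin Y hYS hY.subset
    exact hY.ne this.symm
  have hMne : M.Nonempty := by
    rcases Set.eq_empty_or_nonempty M with he | hne
    · exact absurd (he ▸ hM.2) hα
    · exact hne
  obtain ⟨x, hxM, hxσ⟩ := hσ2 M hMker hMne
  exact (hM.1 hxM).2 hxσ
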